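/- Let $E$ be a measurable space, $f : E \to \mathbb{R}$ a bounded measurable function with $\sup |f| = R$, and let $(X_n)_{n \ge 0}$ be a Markov chain on $E$ such that for every $x \in E$, $\mathbb{E}_x[f(X_1)] \le 0$. Then for every $\varepsilon \in (0, 1/2]$, setting $\gamma = \varepsilon/(1+R)^2$, we have for all $x \in E$ and all $n \ge 0$: $\mathbb{E}_x\left[\exp\left(\gamma \sum_{i=1}^{n} f(X_i)\right)\right] \le \exp(\gamma \varepsilon n)$. -/
import Mathlib


open MeasureTheory ProbabilityTheory

lemma exp_le_one_add_add_sq {t : ℝ} (ht : |t| ≤ 1) :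
    Real.exp t ≤ 1 + t + t ^ 2 := by
  have h := Real.exp_bound ht (by norm_num : 0 < 2)
  simp [Finset.sum_range_succ] at h
  have h2 := abs_le.mp h
  nlinarith [sq_abs t, sq_nonneg t]

/-- **Exponential moment bound for Markov chains with nonpositive drift.**
The Markov chain `(Xₙ)` on `E` is encoded by its transition kernel `κ` (a Markov
kernel), and `M n x = 𝔼ₓ[exp (γ * ∑_{i=1}^n f (X i))]` is encoded by its
defining recursion, which is a consequence of the Markov property:
`M 0 x = 1` and `M (n+1) x = ∫ exp (γ f y) * M n y ∂(κ x)`.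
If `|f| ≤ R` pointwise (with `R = sup |f|`), the drift condition
`𝔼ₓ[f (X₁)] ≤ 0` holds for all `x`, and `0 < ε ≤ 1/2`, `γ = ε / (1+R)²`, then
`M n x ≤ exp (γ ε n)` for all `x` and `n`. -/
theorem stmt2 {E : Type*} [MeasurableSpace E]
    (κ : Kernel E E) [IsMarkovKernel κ]
    (f : E → ℝ) (hf : Measurable f)
    (R : ℝ) (hR0 : 0 ≤ R) (hfR : ∀ x, |f x| ≤ R)
    (hdrift : ∀ x, ∫ y, f y ∂(κ x) ≤ 0)
    (ε γ : ℝ) (hε0 : 0 < ε) (hε : ε ≤ 1 / 2) (hγ : γ = ε / (1 + R) ^ 2)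
    (M : ℕ → E → ℝ)
    (hM0 : ∀ x, M 0 x = 1)
    (hMrec : ∀ n x, M (n + 1) x = ∫ y, Real.exp (γ * f y) * M n y ∂(κ x)) :
    ∀ (x : E) (n : ℕ), M n x ≤ Real.exp (γ * ε * n) := by
  have hRsq : R ≤ (1 + R) ^ 2 := by nlinarith
  have hγ0 : 0 < γ := by rw [hγ]; positivity
  have hγR : γ * R ≤ 1 := by
    rw [hγ, div_mul_eq_mul_div, div_le_one (by positivity)]
    nlinarith
  have hγR2 : γ * R ^ 2 ≤ ε := by
    rw [hγ, div_mul_eq_mul_div, div_le_iff₀ (by positivity)]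
    nlinarith
  -- integrability facts
  have hexpmeas : Measurable fun y => Real.exp (γ * f y) := (hf.const_mul γ).exp
  have hexpint : ∀ x, Integrable (fun y => Real.exp (γ * f y)) (κ x) := by
    intro x
    refine Integrable.mono' (integrable_const (Real.exp (γ * R)))
      hexpmeas.aestronglyMeasurable ?_
    filter_upwards with y
    rw [Real.norm_eq_abs, Real.abs_exp]
    exact Real.exp_le_exp.mpr (by nlinarith [abs_le.mp (hfR y), hγ0.le])
  have hfint : ∀ x, Integrable f (κ x) := by
    intro x
    refine Integrable.mono' (integrable_const R) hf.aestronglyMeasurable ?_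
    filter_upwards with y using hfR y
  have hf2int : ∀ x, Integrable (fun y => (f y) ^ 2) (κ x) := by
    intro x
    refine Integrable.mono' (integrable_const (R ^ 2))
      (hf.pow_const 2).aestronglyMeasurable ?_
    filter_upwards with y
    rw [Real.norm_eq_abs, abs_pow]
    exact pow_le_pow_left₀ (abs_nonneg _) (hfR y) 2
  -- key one-step estimate
  have hstep : ∀ x, ∫ y, Real.exp (γ * f y) ∂(κ x) ≤ Real.exp (γ * ε) := by
    intro x
    have h1 : ∫ y, Real.exp (γ * f y) ∂(κ x)
        ≤ ∫ y, (1 + γ * f y + γ ^ 2 * (f y) ^ 2) ∂(κ x) := by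
      refine integral_mono (hexpint x) ?_ ?_
      · exact ((integrable_const 1).add ((hfint x).const_mul γ)).add
          ((hf2int x).const_mul (γ ^ 2))
      · intro y
        have habs : |γ * f y| ≤ 1 := by
          rw [abs_mul, abs_of_pos hγ0]
          calc γ * |f y| ≤ γ * R := by nlinarith [hfR y, hγ0.le]
            _ ≤ 1 := hγR
        calc Real.exp (γ * f y) ≤ 1 + γ * f y + (γ * f y) ^ 2 :=
              exp_le_one_add_add_sq habs
          _ = 1 + γ * f y + γ ^ 2 * (f y) ^ 2 := by ring
    have i1 : Integrable (fun y => 1 + γ * f y) (κ x) :=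
      (integrable_const 1).add ((hfint x).const_mul γ)
    have i2 : Integrable (fun y => γ ^ 2 * (f y) ^ 2) (κ x) :=
      (hf2int x).const_mul (γ ^ 2)
    have h2 : ∫ y, (1 + γ * f y + γ ^ 2 * (f y) ^ 2) ∂(κ x)
        = 1 + γ * ∫ y, f y ∂(κ x) + γ ^ 2 * ∫ y, (f y) ^ 2 ∂(κ x) := by
      rw [integral_add i1 i2,
        integral_add (integrable_const 1) ((hfint x).const_mul γ),
        integral_const, integral_const_mul, integral_const_mul]
      simp
    have h3 : ∫ y, (f y) ^ 2 ∂(κ x) ≤ R ^ 2 := by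
      calc ∫ y, (f y) ^ 2 ∂(κ x) ≤ ∫ _, R ^ 2 ∂(κ x) := by
            refine integral_mono (hf2int x) (integrable_const _) ?_
            intro y
            dsimp only
            rw [← sq_abs (f y)]
            exact pow_le_pow_left₀ (abs_nonneg _) (hfR y) 2
        _ = R ^ 2 := by simp
    have h4 : 1 + γ * ∫ y, f y ∂(κ x) + γ ^ 2 * ∫ y, (f y) ^ 2 ∂(κ x)
        ≤ 1 + γ * ε := by
      nlinarith [hdrift x, hγ0.le, sq_nonneg γ]
    have h5 : ∫ y, Real.exp (γ * f y) ∂(κ x) ≤ 1 + γ * ε := by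
      calc ∫ y, Real.exp (γ * f y) ∂(κ x)
          ≤ ∫ y, (1 + γ * f y + γ ^ 2 * (f y) ^ 2) ∂(κ x) := h1
        _ = 1 + γ * ∫ y, f y ∂(κ x) + γ ^ 2 * ∫ y, (f y) ^ 2 ∂(κ x) := h2
        _ ≤ 1 + γ * ε := h4
    exact h5.trans (by linarith [Real.add_one_le_exp (γ * ε)])
  -- main induction
  suffices h : ∀ (n : ℕ) (x : E), 0 ≤ M n x ∧ M n x ≤ Real.exp (γ * ε * n) by
    intro x n; exact (h n x).2
  intro n
  induction n with
  | zero => intro x; simp [hM0]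
  | succ n ih =>
    intro x
    constructor
    · rw [hMrec]
      exact integral_nonneg fun y => mul_nonneg (Real.exp_pos _).le (ih y).1
    · rw [hMrec]
      push_cast
      calc ∫ y, Real.exp (γ * f y) * M n y ∂(κ x)
          ≤ ∫ y, Real.exp (γ * f y) * Real.exp (γ * ε * n) ∂(κ x) := by
            refine integral_mono_of_nonneg ?_ ((hexpint x).mul_const _) ?_
            · filter_upwards with y
              exact mul_nonneg (Real.exp_pos _).le (ih y).1
            · filter_upwards with y
              exact mul_le_mul_of_nonneg_left (ih y).2 (Real.exp_pos _).le
        _ = (∫ y, Real.exp (γ * f y) ∂(κ x)) * Real.exp (γ * ε * n) := by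
            rw [integral_mul_const]
        _ ≤ Real.exp (γ * ε) * Real.exp (γ * ε * n) :=
            mul_le_mul_of_nonneg_right (hstep x) (Real.exp_pos _).le
        _ = Real.exp (γ * ε * ((n : ℝ) + 1)) := by
            rw [← Real.exp_add]; ring_nf
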